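/- Let ℰ = (0,1) with Lebesgue measure. For every ζ > 0, the integral operator on L²(0,1) with weak kernel κ^weak(a,b) = (max(a,b))^{-1-ζ} has infinite L²→L² operator norm. Specifically, for f(a) = a^{ζ−1/2} ∈ L²(0,1), one has (𝒦f)(a) = (1/(ζ+1/2)) a^{-1/2} + 2(a^{-1/2} − 1), which is not in L²(0,1). -/

import Mathlib

open MeasureTheory
open scoped ENNReal

/-- Lebesgue measure on the mark space `ℰ = (0,1)`. -/
noncomputable def markMeasure : Measure ℝ := volume.restrict (Set.Ioo (0:ℝ) 1)

/-- The `L²(0,1) → L²(0,1)` operator norm (valued in `[0,∞]`) of the integral operator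
`(𝒦f)(a) = ∫₀¹ κ(a,b) f(b) db`: the supremum of `‖𝒦f‖₂/‖f‖₂` over nonzero `f ∈ L²`. -/
noncomputable def kernelOpNorm2 (κ : ℝ → ℝ → ℝ) : ℝ≥0∞ :=
  ⨆ f : { f : ℝ → ℝ // MemLp f 2 markMeasure ∧ eLpNorm f 2 markMeasure ≠ 0 },
    eLpNorm (fun a => ∫ b, κ a b * f.1 b ∂markMeasure) 2 markMeasure
      / eLpNorm f.1 2 markMeasure

instance : IsFiniteMeasure markMeasure := by
  unfold markMeasure
  constructor
  rw [Measure.restrict_apply_univ, Real.volume_Ioo]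
  norm_num

/-- `a ↦ a^r` is in `L²(0,1)` when `-1 < 2r`. -/
lemma memLp_rpow_aux {r : ℝ} (hr : -1 < 2 * r) :
    MemLp (fun a : ℝ => a ^ r) 2 markMeasure := by
  have hm : AEStronglyMeasurable (fun a : ℝ => a ^ r) markMeasure := by
    have : Measurable fun a : ℝ => a ^ r := by fun_prop
    exact this.aestronglyMeasurable
  rw [memLp_two_iff_integrable_sq hm]
  have hI : IntegrableOn (fun a : ℝ => a ^ (2 * r)) (Set.Ioo 0 1) :=
    (intervalIntegral.integrableOn_Ioo_rpow_iff one_pos).2 hr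
  unfold markMeasure
  apply hI.congr_fun_ae
  filter_upwards [ae_restrict_mem measurableSet_Ioo] with a ha
  rw [sq, ← Real.rpow_add ha.1]
  ring_nf

/-- `a ↦ a^r` is not a.e. zero on `(0,1)`. -/
lemma eLpNorm_rpow_ne_zero (r : ℝ) :
    eLpNorm (fun a : ℝ => a ^ r) 2 markMeasure ≠ 0 := by
  have hm : AEStronglyMeasurable (fun a : ℝ => a ^ r) markMeasure := by
    have : Measurable fun a : ℝ => a ^ r := by fun_prop
    exact this.aestronglyMeasurable
  intro h0'
  rw [eLpNorm_eq_zero_iff hm (by norm_num)] at h0'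
  have h0 := h0'
  have hFalse : ∀ᵐ a ∂markMeasure, False := by
    have hmem : ∀ᵐ a ∂markMeasure, a ∈ Set.Ioo (0:ℝ) 1 := by
      unfold markMeasure; exact ae_restrict_mem measurableSet_Ioo
    filter_upwards [h0, hmem] with a h1 h2
    exact (Real.rpow_pos_of_pos h2.1 r).ne' h1
  rw [ae_iff] at hFalse
  simp only [not_false_eq_true, Set.setOf_true] at hFalse
  have : markMeasure Set.univ = 1 := by
    unfold markMeasure
    rw [Measure.restrict_apply_univ, Real.volume_Ioo]
    norm_num
  rw [this] at hFalse
  exact one_ne_zero hFalse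

/-- Weak kernel `κ(a,b) = (max a b)^{-1-ζ}` on `(0,1)`: for every `ζ > 0` the operator norm
is infinite. Specifically `f(a) = a^{ζ-1/2}` lies in `L²(0,1)`, and
`(𝒦f)(a) = (1/(ζ+1/2)) a^{-1/2} + 2(a^{-1/2} − 1)`, which is not in `L²(0,1)`. -/
theorem weakKernel_opNorm_top (ζ : ℝ) (hζ : 0 < ζ) :
    MemLp (fun a : ℝ => a ^ (ζ - 1/2)) 2 markMeasure ∧
    (∀ a ∈ Set.Ioo (0:ℝ) 1,
      ∫ b, (max a b) ^ (-1 - ζ) * b ^ (ζ - 1/2) ∂markMeasure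
        = (1 / (ζ + 1/2)) * a ^ (-(1:ℝ)/2) + 2 * (a ^ (-(1:ℝ)/2) - 1)) ∧
    ¬ MemLp (fun a : ℝ => ∫ b, (max a b) ^ (-1 - ζ) * b ^ (ζ - 1/2) ∂markMeasure)
        2 markMeasure ∧
    kernelOpNorm2 (fun a b => (max a b) ^ (-1 - ζ)) = ⊤ := by
  have hmemf : MemLp (fun a : ℝ => a ^ (ζ - 1/2)) 2 markMeasure :=
    memLp_rpow_aux (by linarith)
  -- Part 2 : the integral formula
  have key : ∀ a ∈ Set.Ioo (0:ℝ) 1,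
      ∫ b, (max a b) ^ (-1 - ζ) * b ^ (ζ - 1/2) ∂markMeasure
        = (1 / (ζ + 1/2)) * a ^ (-(1:ℝ)/2) + 2 * (a ^ (-(1:ℝ)/2) - 1) := by
    intro a ha
    obtain ⟨ha0, ha1⟩ := ha
    have hconv : ∫ b, (max a b) ^ (-1 - ζ) * b ^ (ζ - 1/2) ∂markMeasure
        = ∫ b in (0:ℝ)..1, (max a b) ^ (-1 - ζ) * b ^ (ζ - 1/2) := by
      unfold markMeasure
      rw [intervalIntegral.integral_of_le zero_le_one,
        MeasureTheory.integral_Ioc_eq_integral_Ioo]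
    -- integrability on each subinterval
    have hint1 : IntervalIntegrable
        (fun b => (max a b) ^ (-1 - ζ) * b ^ (ζ - 1/2)) volume 0 a := by
      apply ((intervalIntegral.intervalIntegrable_rpow' (a := 0) (b := a)
        (by linarith : (-1:ℝ) < ζ - 1/2)).const_mul (a ^ (-1 - ζ))).congr
      intro b hb
      dsimp only
      rw [Set.uIoc_of_le ha0.le] at hb
      rw [max_eq_left hb.2]
    have hint2 : IntervalIntegrable
        (fun b => (max a b) ^ (-1 - ζ) * b ^ (ζ - 1/2)) volume a 1 := by
      apply (intervalIntegral.intervalIntegrable_rpow (μ := volume) (a := a) (b := 1)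
        (r := -(3:ℝ)/2) (Or.inr ?_)).congr
      · intro b hb
        dsimp only
        rw [Set.uIoc_of_le ha1.le] at hb
        rw [max_eq_right hb.1.le, ← Real.rpow_add (lt_trans ha0 hb.1)]
        norm_num
      · rw [Set.uIcc_of_le ha1.le]
        intro h
        exact absurd h.1 (not_le.2 ha0)
    have hsplit : ∫ b in (0:ℝ)..1, (max a b) ^ (-1 - ζ) * b ^ (ζ - 1/2)
        = (∫ b in (0:ℝ)..a, (max a b) ^ (-1 - ζ) * b ^ (ζ - 1/2))
          + ∫ b in a..1, (max a b) ^ (-1 - ζ) * b ^ (ζ - 1/2) :=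
      (intervalIntegral.integral_add_adjacent_intervals hint1 hint2).symm
    have hI1 : ∫ b in (0:ℝ)..a, (max a b) ^ (-1 - ζ) * b ^ (ζ - 1/2)
        = (1 / (ζ + 1/2)) * a ^ (-(1:ℝ)/2) := by
      rw [intervalIntegral.integral_congr
        (g := fun b => a ^ (-1 - ζ) * b ^ (ζ - 1/2)) ?_]
      · rw [intervalIntegral.integral_const_mul,
          integral_rpow (Or.inl (by linarith : (-1:ℝ) < ζ - 1/2))]
        have h1 : ζ - 1/2 + 1 = ζ + 1/2 := by ring
        rw [h1, Real.zero_rpow (by positivity : ζ + 1/2 ≠ 0), sub_zero,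
          mul_div_assoc']
        rw [← Real.rpow_add ha0]
        have h2 : -1 - ζ + (ζ + 1/2) = -(1:ℝ)/2 := by ring
        rw [h2]
        ring
      · intro b hb
        rw [Set.uIcc_of_le ha0.le] at hb
        simp only [max_eq_left hb.2]
    have hI2 : ∫ b in a..(1:ℝ), (max a b) ^ (-1 - ζ) * b ^ (ζ - 1/2)
        = 2 * (a ^ (-(1:ℝ)/2) - 1) := by
      rw [intervalIntegral.integral_congr (g := fun b => b ^ (-(3:ℝ)/2)) ?_]
      · rw [integral_rpow (Or.inr ⟨by norm_num, ?_⟩)]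
        · have h1 : -(3:ℝ)/2 + 1 = -(1:ℝ)/2 := by norm_num
          rw [h1, Real.one_rpow]
          field_simp
          ring
        · rw [Set.uIcc_of_le ha1.le]
          intro h
          exact absurd h.1 (not_le.2 ha0)
      · intro b hb
        rw [Set.uIcc_of_le ha1.le] at hb
        simp only [max_eq_right hb.1]
        rw [← Real.rpow_add (lt_of_lt_of_le ha0 hb.1)]
        norm_num
    rw [hconv, hsplit, hI1, hI2]
  -- Part 3 : Kf is not in L²
  have hKnot : ¬ MemLp (fun a : ℝ =>
      ∫ b, (max a b) ^ (-1 - ζ) * b ^ (ζ - 1/2) ∂markMeasure) 2 markMeasure := by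
    intro hmem
    set c : ℝ := 1 / (ζ + 1/2) + 2 with hc
    have hcpos : 0 < c := by positivity
    have hae : (fun a : ℝ => ∫ b, (max a b) ^ (-1 - ζ) * b ^ (ζ - 1/2) ∂markMeasure)
        =ᵐ[markMeasure] fun a => c * a ^ (-(1:ℝ)/2) - 2 := by
      have hmem' : ∀ᵐ a ∂markMeasure, a ∈ Set.Ioo (0:ℝ) 1 := by
        unfold markMeasure; exact ae_restrict_mem measurableSet_Ioo
      filter_upwards [hmem'] with a ha
      rw [key a ha, hc]
      ring
    have h1 : MemLp (fun a : ℝ => c * a ^ (-(1:ℝ)/2) - 2) 2 markMeasure :=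
      hmem.ae_eq hae
    have h2 : MemLp (fun a : ℝ => c * a ^ (-(1:ℝ)/2)) 2 markMeasure := by
      have := h1.add (memLp_const (2:ℝ))
      apply this.ae_eq
      filter_upwards with a
      simp only [Pi.add_apply]
      ring
    have h3 : MemLp (fun a : ℝ => a ^ (-(1:ℝ)/2)) 2 markMeasure := by
      have := h2.const_mul c⁻¹
      apply this.ae_eq
      filter_upwards with a
      field_simp
    rw [memLp_two_iff_integrable_sq h3.1] at h3
    have h4' : Integrable (fun a : ℝ => a ^ (-(1:ℝ))) markMeasure := by
      apply h3.congr
      have hmem' : ∀ᵐ a ∂markMeasure, a ∈ Set.Ioo (0:ℝ) 1 := by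
        unfold markMeasure; exact ae_restrict_mem measurableSet_Ioo
      filter_upwards [hmem'] with a ha
      rw [sq, ← Real.rpow_add ha.1]
      norm_num
    have h4 : IntegrableOn (fun a : ℝ => a ^ (-(1:ℝ))) (Set.Ioo 0 1) := by
      unfold markMeasure at h4'
      exact h4'
    rw [intervalIntegral.integrableOn_Ioo_rpow_iff one_pos] at h4
    linarith
  refine ⟨hmemf, key, hKnot, ?_⟩
  -- Part 4 : operator norm is ⊤
  have hfne : eLpNorm (fun a : ℝ => a ^ (ζ - 1/2)) 2 markMeasure ≠ 0 :=
    eLpNorm_rpow_ne_zero _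
  set F : { f : ℝ → ℝ // MemLp f 2 markMeasure ∧ eLpNorm f 2 markMeasure ≠ 0 } :=
    ⟨fun a : ℝ => a ^ (ζ - 1/2), hmemf, hfne⟩ with hF
  have hKm : AEStronglyMeasurable (fun a : ℝ =>
      ∫ b, (max a b) ^ (-1 - ζ) * b ^ (ζ - 1/2) ∂markMeasure) markMeasure := by
    have hmes : Measurable fun a : ℝ => (1 / (ζ + 1/2) + 2) * a ^ (-(1:ℝ)/2) - 2 := by
      fun_prop
    apply hmes.aestronglyMeasurable.congr
    have hmem' : ∀ᵐ a ∂markMeasure, a ∈ Set.Ioo (0:ℝ) 1 := by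
      unfold markMeasure; exact ae_restrict_mem measurableSet_Ioo
    filter_upwards [hmem'] with a ha
    rw [key a ha]
    ring
  have hKtop : eLpNorm (fun a : ℝ =>
      ∫ b, (max a b) ^ (-1 - ζ) * b ^ (ζ - 1/2) ∂markMeasure) 2 markMeasure = ⊤ := by
    by_contra h
    exact hKnot ⟨hKm, lt_top_iff_ne_top.2 h⟩
  rw [eq_top_iff, kernelOpNorm2]
  refine le_trans (le_of_eq ?_) (le_iSup _ F)
  rw [hF]
  simp only
  rw [hKtop]
  exact (ENNReal.div_eq_top.2 (Or.inr ⟨rfl, hmemf.2.ne⟩)).symm
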